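/- For every k ∈ {0,…,N−1}, every vector x ∈ ℂ^M, and every ℓ ∈ {0,…,M−1}, the ℓ-th entry of (U_k^H H̄_k U_k) x equals Σ_{p=0}^{P−1} h(p) · γ̄(k,ℓ,p) · x((ℓ−p) mod M). In other words, the OTFS delay-Doppler input–output relation for a stationary user, Y[ℓ,k] = Σ_{p=0}^{P−1} h(p) γ̄(k,ℓ,p) X[(ℓ−p) mod M, k] + ω[ℓ,k], is equivalent to the vector relation y_k = U_k^H H̄_k U_k x_k + ω_k applied column by column. -/

import Mathlib

open Finset Matrix

noncomputable def ee (M N : ℕ) (a : ℤ) : ℂ :=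
  Complex.exp (2 * Real.pi * Complex.I * a / (M * N))

lemma ee_add (M N : ℕ) (a b : ℤ) : ee M N (a + b) = ee M N a * ee M N b := by
  rw [ee, ee, ee, ← Complex.exp_add]
  congr 1
  push_cast
  ring

lemma ee_zero (M N : ℕ) : ee M N 0 = 1 := by simp [ee]

lemma ee_conj (M N : ℕ) (a : ℤ) : (starRingEnd ℂ) (ee M N a) = ee M N (-a) := by
  rw [ee, ee, ← Complex.exp_conj]
  congr 1
  simp only [map_div₀, _root_.map_mul, map_ofNat, Complex.conj_ofReal, Complex.conj_I, map_intCast, map_natCast]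
  push_cast
  ring

lemma ee_nat_mul (M N : ℕ) (a : ℤ) (n : ℕ) : ee M N (a * n) = ee M N a ^ n := by
  induction n with
  | zero => simp [ee_zero]
  | succ n ih => push_cast; rw [mul_add, ee_add, mul_one, ih, pow_succ]

lemma ee_unit (M N : ℕ) (hM : 0 < M) (hN : 0 < N) (t : ℤ) : ee M N ((M * N) * t) = 1 := by
  have hM0 : (M:ℂ) ≠ 0 := Nat.cast_ne_zero.2 hM.ne'
  have hN0 : (N:ℂ) ≠ 0 := Nat.cast_ne_zero.2 hN.ne'
  rw [ee]
  have : (2 * (Real.pi:ℂ) * Complex.I * ((M:ℤ) * N * t : ℤ)) / ((M:ℂ) * N) = t * (2 * Real.pi * Complex.I) := by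
    push_cast
    field_simp
  rw [this]
  exact Complex.exp_int_mul_two_pi_mul_I t

lemma ee_geom (M N : ℕ) (hM : 0 < M) (hN : 0 < N) (d : ℤ) :
    ∑ s ∈ range M, ee M N ((N : ℤ) * s * d) = if (M : ℤ) ∣ d then (M : ℂ) else 0 := by
  have hM0 : (M:ℂ) ≠ 0 := Nat.cast_ne_zero.2 hM.ne'
  have hN0 : (N:ℂ) ≠ 0 := Nat.cast_ne_zero.2 hN.ne'
  have hpow : ∀ s : ℕ, ee M N ((N : ℤ) * s * d) = ee M N ((N:ℤ) * d) ^ s := by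
    intro s
    rw [← ee_nat_mul]
    congr 1
    ring
  rw [Finset.sum_congr rfl fun s _ => hpow s]
  split_ifs with hdvd
  · obtain ⟨t, rfl⟩ := hdvd
    have h1 : ee M N ((N:ℤ) * ((M:ℤ) * t)) = 1 := by
      rw [show (N:ℤ) * ((M:ℤ) * t) = ((M:ℤ) * N) * t by ring]
      exact ee_unit M N hM hN t
    simp [h1]
  · have hω1 : ee M N ((N:ℤ) * d) ≠ 1 := by
      intro heq
      rw [ee, Complex.exp_eq_one_iff] at heq
      obtain ⟨n, hn⟩ := heq
      apply hdvd
      have hπ : (2 * (Real.pi:ℂ) * Complex.I) ≠ 0 := by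
        simp [Real.pi_ne_zero, Complex.I_ne_zero, Complex.ofReal_ne_zero]
      have h2 : (d : ℂ) = n * M := by
        field_simp at hn
        have h3 : 2 * (Real.pi:ℂ) * Complex.I * ((N:ℂ) * d) = 2 * (Real.pi:ℂ) * Complex.I * ((N:ℂ) * (n * M)) := by
          push_cast at hn
          linear_combination (2 * (Real.pi:ℂ) * Complex.I) * hn
        have h4 := mul_left_cancel₀ hπ h3
        exact mul_left_cancel₀ hN0 h4
      have h5 : d = n * M := by exact_mod_cast h2
      exact ⟨n, by rw [h5]; ring⟩
    have hωM : ee M N ((N:ℤ) * d) ^ M = 1 := by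
      rw [← ee_nat_mul, show (N:ℤ) * d * M = ((M:ℤ) * N) * d by ring]
      exact ee_unit M N hM hN d
    rw [geom_sum_eq hω1, hωM]
    simp

/-- The residue of an integer `a` modulo `M > 0`, as an element of `Fin M`. -/
def residueIdx (M : ℕ) (hM : 0 < M) (a : ℤ) : Fin M :=
  ⟨(a % (M : ℤ)).toNat, by
    have hlt : a % (M : ℤ) < (M : ℤ) := Int.emod_lt_of_pos _ (by exact_mod_cast hM)
    have hnonneg : 0 ≤ a % (M : ℤ) := Int.emod_nonneg _ (by exact_mod_cast hM.ne')
    omega⟩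

/-- For every `k ∈ {0,…,N−1}`, every vector `x ∈ ℂ^M`, and every
`ℓ ∈ {0,…,M−1}`, the `ℓ`-th entry of `(U_kᴴ H̄_k U_k) x` equals
`∑_{p=0}^{P−1} h p · γ̄(k,ℓ,p) · x((ℓ−p) mod M)`. This expresses the equivalence of the
OTFS delay–Doppler input–output relation for a stationary user with the vector relation
`y_k = U_kᴴ H̄_k U_k x_k + ω_k` applied column by column. -/
theorem stmt_3 (M N P : ℕ) (hM : 0 < M) (hN : 0 < N) (hP : 0 < P) (hPM : P ≤ M)
    (h : ℕ → ℂ) (Hf : ℕ → ℂ)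
    (hHf : ∀ c : ℕ, Hf c = ∑ p ∈ range P,
      h p * Complex.exp (-2 * Real.pi * Complex.I * c * p / (M * N)))
    (k : ℕ) (hk : k < N)
    (FM : Matrix (Fin M) (Fin M) ℂ)
    (hFM : ∀ r m : Fin M,
      FM r m = (1 / Real.sqrt M) * Complex.exp (-2 * Real.pi * Complex.I * (r : ℕ) * (m : ℕ) / M))
    (Λ : Matrix (Fin M) (Fin M) ℂ)
    (hΛ : Λ = Matrix.diagonal (fun m : Fin M =>
      Complex.exp (-2 * Real.pi * Complex.I * (m : ℕ) * k / (M * N))))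
    (Hbar : Matrix (Fin M) (Fin M) ℂ)
    (hHbar : Hbar = Matrix.diagonal (fun r : Fin M => Hf (k + (r : ℕ) * N)))
    (U : Matrix (Fin M) (Fin M) ℂ) (hU : U = FM * Λ)
    (γbar : Fin M → ℕ → ℂ)
    (hγbar : ∀ (ℓ : Fin M) (p : ℕ),
      γbar ℓ p = if p ≤ (ℓ : ℕ) then 1 else Complex.exp (-2 * Real.pi * Complex.I * k / N)) :
    ∀ (x : Fin M → ℂ) (ℓ : Fin M),
      (Uᴴ * Hbar * U).mulVec x ℓ =
        ∑ p ∈ range P, h p * γbar ℓ p * x (residueIdx M hM (((ℓ : ℕ) : ℤ) - (p : ℤ))) := by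
  intro x ℓ
  have hM0 : (M:ℂ) ≠ 0 := Nat.cast_ne_zero.2 hM.ne'
  have hN0 : (N:ℂ) ≠ 0 := Nat.cast_ne_zero.2 hN.ne'
  have hs0 : (Real.sqrt M : ℂ) ≠ 0 := by
    simp only [ne_eq, Complex.ofReal_eq_zero]
    exact Real.sqrt_ne_zero'.2 (by exact_mod_cast hM)
  have hsq : ((1:ℂ) / (Real.sqrt M : ℂ)) * ((1:ℂ) / (Real.sqrt M : ℂ)) = (M:ℂ)⁻¹ := by
    have : (Real.sqrt M : ℂ) * (Real.sqrt M : ℂ) = (M:ℂ) := by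
      rw [← Complex.ofReal_mul, Real.mul_self_sqrt (Nat.cast_nonneg M)]
      norm_cast
    rw [div_mul_div_comm, one_mul, this, one_div]
  -- entries of U
  have hUe : ∀ j m : Fin M, U j m =
      (1 / (Real.sqrt M : ℂ)) * ee M N (-((N:ℤ) * j * m + (m:ℤ) * k)) := by
    intro j m
    rw [hU, hΛ, Matrix.mul_diagonal, hFM, mul_assoc, ee, ← Complex.exp_add]
    congr 2
    push_cast
    field_simp
    ring
  have hUconj : ∀ j m : Fin M, (starRingEnd ℂ) (U j m) =
      (1 / (Real.sqrt M : ℂ)) * ee M N ((N:ℤ) * j * m + (m:ℤ) * k) := by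
    intro j m
    rw [hUe, _root_.map_mul, ee_conj, neg_neg]
    congr 1
    simp [Complex.conj_ofReal]
  -- exp in Hf as ee
  have hE : ∀ c p : ℕ, Complex.exp (-2 * Real.pi * Complex.I * c * p / (M * N)) =
      ee M N (-((c:ℤ) * p)) := by
    intro c p
    rw [ee]
    congr 1
    push_cast
    ring
  -- expand the matrix product
  have expand : (Uᴴ * Hbar * U).mulVec x ℓ =
      ∑ m : Fin M, (∑ j : Fin M, (starRingEnd ℂ) (U j ℓ) * (Hf (k + (j:ℕ) * N) * U j m)) * x m := by
    rw [hHbar, Matrix.mul_assoc]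
    simp only [Matrix.mulVec, dotProduct, Matrix.mul_apply, Matrix.diagonal_apply,
      Matrix.conjTranspose_apply, RCLike.star_def, ite_mul, zero_mul, Finset.sum_ite_eq,
      Finset.mem_univ, if_true]
  rw [expand]
  -- key per-entry computation
  have key : ∀ m j : Fin M, (starRingEnd ℂ) (U j ℓ) * (Hf (k + (j:ℕ) * N) * U j m) =
      ∑ p ∈ range P, (M:ℂ)⁻¹ * h p * ee M N ((N:ℤ) * j * ((ℓ:ℤ) - m - p))
        * ee M N ((k:ℤ) * ((ℓ:ℤ) - m - p)) := by
    intro m j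
    rw [← mul_assoc, hUconj, hUe, hHf, Finset.mul_sum, Finset.sum_mul]
    refine Finset.sum_congr rfl fun p _ => ?_
    rw [hE (k + (j:ℕ) * N) p]
    have hcomb : ee M N ((N:ℤ) * j * ℓ + (ℓ:ℤ) * k) * ee M N (-(((k + (j:ℕ)*N : ℕ):ℤ) * p))
        * ee M N (-((N:ℤ) * j * m + (m:ℤ) * k))
        = ee M N ((N:ℤ) * j * ((ℓ:ℤ) - m - p)) * ee M N ((k:ℤ) * ((ℓ:ℤ) - m - p)) := by
      rw [← ee_add, ← ee_add, ← ee_add]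
      congr 1
      push_cast
      ring
    linear_combination (h p * (1 / (Real.sqrt M : ℂ)) * (1 / (Real.sqrt M : ℂ))) * hcomb
      + (h p * (ee M N ((N:ℤ) * j * ((ℓ:ℤ) - m - p)) * ee M N ((k:ℤ) * ((ℓ:ℤ) - m - p)))) * hsq
  calc
    ∑ m : Fin M, (∑ j : Fin M, (starRingEnd ℂ) (U j ℓ) * (Hf (k + (j:ℕ) * N) * U j m)) * x m
      = ∑ m : Fin M, ∑ j : Fin M, ∑ p ∈ range P,
          (M:ℂ)⁻¹ * h p * ee M N ((N:ℤ) * j * ((ℓ:ℤ) - m - p))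
            * ee M N ((k:ℤ) * ((ℓ:ℤ) - m - p)) * x m := by
        refine Finset.sum_congr rfl fun m _ => ?_
        rw [Finset.sum_mul]
        refine Finset.sum_congr rfl fun j _ => ?_
        rw [key m j, Finset.sum_mul]
    _ = ∑ m : Fin M, ∑ p ∈ range P, ∑ j : Fin M,
          (M:ℂ)⁻¹ * h p * ee M N ((N:ℤ) * j * ((ℓ:ℤ) - m - p))
            * ee M N ((k:ℤ) * ((ℓ:ℤ) - m - p)) * x m :=
        Finset.sum_congr rfl fun m _ => Finset.sum_comm
    _ = ∑ p ∈ range P, ∑ m : Fin M, ∑ j : Fin M,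
          (M:ℂ)⁻¹ * h p * ee M N ((N:ℤ) * j * ((ℓ:ℤ) - m - p))
            * ee M N ((k:ℤ) * ((ℓ:ℤ) - m - p)) * x m := Finset.sum_comm
    _ = ∑ p ∈ range P, ∑ m : Fin M,
          (M:ℂ)⁻¹ * h p * ee M N ((k:ℤ) * ((ℓ:ℤ) - m - p)) * x m *
            (if (M:ℤ) ∣ ((ℓ:ℤ) - m - p) then (M:ℂ) else 0) := by
        refine Finset.sum_congr rfl fun p _ => Finset.sum_congr rfl fun m _ => ?_
        rw [← ee_geom M N hM hN ((ℓ:ℤ) - m - p),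
           ← Fin.sum_univ_eq_sum_range (fun s => ee M N ((N:ℤ) * s * ((ℓ:ℤ) - m - p))) M,
           Finset.mul_sum]
        exact Finset.sum_congr rfl fun j _ => by ring
    _ = ∑ p ∈ range P, h p * γbar ℓ p * x (residueIdx M hM (((ℓ : ℕ) : ℤ) - (p : ℤ))) := by
        refine Finset.sum_congr rfl fun p hp => ?_
        have hpP : p < P := Finset.mem_range.1 hp
        set m₀ : Fin M := residueIdx M hM (((ℓ : ℕ) : ℤ) - (p : ℤ)) with hm₀def
        have hm₀ : ((m₀ : ℕ) : ℤ) = (((ℓ : ℕ) : ℤ) - (p : ℤ)) % M := by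
          simp only [hm₀def, residueIdx]
          exact Int.toNat_of_nonneg (Int.emod_nonneg _ (by exact_mod_cast hM.ne'))
        have hmlt : ∀ m : Fin M, ((m:ℕ):ℤ) < M := fun m => by exact_mod_cast m.isLt
        rw [Finset.sum_eq_single m₀]
        · have hdvd : (M:ℤ) ∣ ((ℓ:ℤ) - m₀ - p) := by
            refine ⟨(((ℓ : ℕ) : ℤ) - (p : ℤ)) / M, ?_⟩
            have := Int.mul_ediv_add_emod (((ℓ : ℕ) : ℤ) - (p : ℤ)) M
            omega
          rw [if_pos hdvd, hγbar]
          by_cases hcase : p ≤ (ℓ : ℕ)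
          · rw [if_pos hcase]
            have hmod : (((ℓ : ℕ) : ℤ) - (p : ℤ)) % M = ((ℓ : ℕ) : ℤ) - (p : ℤ) :=
              Int.emod_eq_of_lt (by omega) (by have := hmlt ℓ; omega)
            have h0 : (k:ℤ) * ((ℓ:ℤ) - m₀ - p) = 0 := by
              have : ((m₀:ℕ):ℤ) = ((ℓ:ℕ):ℤ) - p := by omega
              rw [this]; ring
            rw [h0, ee_zero]
            first
            | (field_simp; ring)
            | field_simp
          · rw [if_neg hcase]
            have hmod : (((ℓ : ℕ) : ℤ) - (p : ℤ)) % M = ((ℓ : ℕ) : ℤ) - (p : ℤ) + M := by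
              have h1 : ((((ℓ : ℕ) : ℤ) - (p : ℤ)) + (M:ℤ) * 1) % M = (((ℓ : ℕ) : ℤ) - (p : ℤ)) % M :=
                by rw [Int.add_mul_emod_self_left]
              have hlM : ((ℓ:ℕ):ℤ) < M := by exact_mod_cast ℓ.isLt
              have h2 : ((((ℓ : ℕ) : ℤ) - (p : ℤ)) + (M:ℤ) * 1) % M = (((ℓ : ℕ) : ℤ) - (p : ℤ)) + M * 1 :=
                Int.emod_eq_of_lt (by omega) (by omega)
              omega
            have h0 : ((ℓ:ℤ) - m₀ - p) = -(M:ℤ) := by omega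
            rw [h0]
            have hEE : ee M N ((k:ℤ) * -(M:ℤ)) = Complex.exp (-2 * Real.pi * Complex.I * k / N) := by
              rw [ee]
              congr 1
              push_cast
              first
              | (field_simp; ring)
              | field_simp
            rw [hEE]
            first
            | (field_simp; ring)
            | field_simp
        · intro m _ hne
          have hnd : ¬ (M:ℤ) ∣ ((ℓ:ℤ) - m - p) := by
            rintro ⟨t, ht⟩
            apply hne
            have h1 : (((ℓ : ℕ) : ℤ) - (p : ℤ)) % M = ((m:ℕ):ℤ) := by
              have h2 : ((ℓ : ℕ) : ℤ) - (p : ℤ) = ((m:ℕ):ℤ) + (M:ℤ) * t := by linarith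
              rw [h2, Int.add_mul_emod_self_left,
                Int.emod_eq_of_lt (by positivity) (hmlt m)]
            apply Fin.ext
            have := hm₀
            omega
          rw [if_neg hnd, mul_zero]
        · intro habs
          exact absurd (Finset.mem_univ m₀) habs
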